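/- (Theorem 3, 1-D exact form.) Let M, L, N be integers with 1 ≤ L ≤ M−1 and m = M−L+1 ≥ 2, let μ ∈ ℝ, let s ∈ ℂ^N with s ≠ 0, and let σ > 0. Define: ā ∈ ℂ^M with ā_k = exp(i(k−(M−1)/2)μ), k = 0,…,M−1; the subarray selection matrices J_ℓ ∈ ℝ^{m×M}, ℓ = 1,…,L; a = J_1 ā ∈ ℂ^m; a_L ∈ ℂ^L with (a_L)_ℓ = exp(i(ℓ−1)μ); s_L = a_L ⊗ s ∈ ℂ^{NL}; u = a/√m; v = conj(s_L)/‖s_L‖; σ_1 = √m·‖s_L‖; the projector P = I_m − a a^H/m; the maximal-overlap selectors K_1 = [I_{m−1}, 0], K_2 = [0, I_{m−1}] ∈ ℝ^{(m−1)×m}; the row vector r^T = ((K_1 u)^H/‖K_1 u‖²) · (exp(−iμ)·K_2 − K_1) ∈ ℂ^{1×m}; the matrix W = (σ_1^{−1} vᵀ) ⊗ P ∈ ℂ^{m×mNL}; the vector z = Wᵀ r ∈ ℂ^{mNL}; the stacked selection matrix 𝕄 ∈ ℝ^{mNL×MN} obtained by vertically stacking (I_N ⊗ J_ℓ) for ℓ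 = 1,…,L; and the smoothed noise covariance R_SS = σ²·𝕄 𝕄ᵀ. Then the first-order MSE expression of 1-D Standard ESPRIT with spatial smoothing evaluates exactly to (1/2)·z^H R_SS z = (σ²/‖s‖²) · min{L, M−L} / ((M−L)² L²). -/

import Mathlib

open Matrix Complex

/-- Centered Vandermonde steering vector `ā(μ) ∈ ℂ^M`: `ā_k = exp(i(k-(M-1)/2)μ)`. -/
noncomputable def abar (M : ℕ) (μ : ℝ) : Fin M → ℂ :=
  fun k => Complex.exp (Complex.I * (((k : ℝ) - ((M : ℝ) - 1) / 2) : ℝ) * (μ : ℂ))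

/-- Subarray selection matrix with (0-based) shift `ℓ`:
`(sel M L ℓ)_{p,q} = 1` iff `q = p + ℓ` (so the 1-based `J_ℓ` is `sel M L (ℓ-1)`). -/
def sel (M L ℓ : ℕ) : Matrix (Fin (M - L + 1)) (Fin M) ℂ :=
  Matrix.of fun p q => if (q : ℕ) = (p : ℕ) + ℓ then 1 else 0

/-- Euclidean norm of a complex vector. -/
noncomputable def vecEnorm {ι : Type*} [Fintype ι] (x : ι → ℂ) : ℝ :=
  Real.sqrt (∑ i, Complex.normSq (x i))

/-- First-subarray steering vector `a = J₁ ā ∈ ℂ^m`, `m = M - L + 1`. -/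
noncomputable def avec (M L : ℕ) (μ : ℝ) : Fin (M - L + 1) → ℂ :=
  sel M L 0 *ᵥ abar M μ

/-- Smoothed symbol vector `s_L = a_L ⊗ s ∈ ℂ^{NL}` with `(a_L)_ℓ = exp(i(ℓ-1)μ)`,
indexed by `Fin L × Fin N`. -/
noncomputable def sLvec (L N : ℕ) (μ : ℝ) (s : Fin N → ℂ) : Fin L × Fin N → ℂ :=
  fun c => Complex.exp (Complex.I * ((c.1 : ℕ) : ℂ) * (μ : ℂ)) * s c.2

/-- Left singular vector `u = a/√m` of the noise-free smoothed data matrix. -/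
noncomputable def uvec (M L : ℕ) (μ : ℝ) : Fin (M - L + 1) → ℂ :=
  fun i => avec M L μ i / ((Real.sqrt ((M : ℝ) - (L : ℝ) + 1) : ℝ) : ℂ)

/-- Right singular vector `v = conj(s_L)/‖s_L‖`. -/
noncomputable def vvec (L N : ℕ) (μ : ℝ) (s : Fin N → ℂ) : Fin L × Fin N → ℂ :=
  fun c => star (sLvec L N μ s c) / ((vecEnorm (sLvec L N μ s) : ℝ) : ℂ)

/-- Singular value `σ₁ = √m ‖s_L‖`. -/
noncomputable def sigma1 (M L N : ℕ) (μ : ℝ) (s : Fin N → ℂ) : ℝ :=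
  Real.sqrt ((M : ℝ) - (L : ℝ) + 1) * vecEnorm (sLvec L N μ s)

/-- Orthogonal projector onto the noise subspace: `P = I_m - a aᴴ / m`. -/
noncomputable def Pproj (M L : ℕ) (μ : ℝ) :
    Matrix (Fin (M - L + 1)) (Fin (M - L + 1)) ℂ :=
  1 - (((M - L + 1 : ℕ) : ℂ))⁻¹ •
    Matrix.vecMulVec (avec M L μ) (star (avec M L μ))

/-- Maximum-overlap selector `K₁ = [I_{m-1}, 0]`. -/
def K1 (m : ℕ) : Matrix (Fin (m - 1)) (Fin m) ℂ :=
  Matrix.of fun p q => if (q : ℕ) = (p : ℕ) then 1 else 0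

/-- Maximum-overlap selector `K₂ = [0, I_{m-1}]`. -/
def K2 (m : ℕ) : Matrix (Fin (m - 1)) (Fin m) ℂ :=
  Matrix.of fun p q => if (q : ℕ) = (p : ℕ) + 1 then 1 else 0

/-- `w = K₁ u`. -/
noncomputable def wvec (M L : ℕ) (μ : ℝ) : Fin (M - L + 1 - 1) → ℂ :=
  K1 (M - L + 1) *ᵥ uvec M L μ

/-- The row vector `rᵀ = ((K₁u)ᴴ/‖K₁u‖²)(exp(-iμ)K₂ - K₁)`, stored as a vector. -/
noncomputable def rvec (M L : ℕ) (μ : ℝ) : Fin (M - L + 1) → ℂ :=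
  fun j => (((vecEnorm (wvec M L μ)) ^ 2 : ℝ) : ℂ)⁻¹ *
    (((fun p => star (wvec M L μ p)) ᵥ*
      (Complex.exp (-(Complex.I * (μ : ℂ))) • K2 (M - L + 1) - K1 (M - L + 1))) j)

/-- The matrix `W = (σ₁⁻¹ vᵀ) ⊗ P ∈ ℂ^{m × mNL}`, with column index `(ℓ, n, p)`. -/
noncomputable def Wmat (M L N : ℕ) (μ : ℝ) (s : Fin N → ℂ) :
    Matrix (Fin (M - L + 1)) (Fin L × Fin N × Fin (M - L + 1)) ℂ :=
  Matrix.of fun i c =>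
    ((sigma1 M L N μ s : ℝ) : ℂ)⁻¹ * vvec L N μ s (c.1, c.2.1) * Pproj M L μ i c.2.2

/-- The vector `z = Wᵀ r ∈ ℂ^{mNL}`. -/
noncomputable def zvec (M L N : ℕ) (μ : ℝ) (s : Fin N → ℂ) :
    Fin L × Fin N × Fin (M - L + 1) → ℂ :=
  (Wmat M L N μ s)ᵀ *ᵥ rvec M L μ

/-- Stacked selection matrix `𝕄 ∈ ℝ^{mNL × MN}`, vertically stacking `I_N ⊗ J_ℓ`
for `ℓ = 1, …, L` (row index `(ℓ, n, p)`, column index `(n', q)`). -/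
def Mstack (M L N : ℕ) : Matrix (Fin L × Fin N × Fin (M - L + 1)) (Fin N × Fin M) ℂ :=
  Matrix.of fun rI cI => if rI.2.1 = cI.1 then sel M L (rI.1 : ℕ) rI.2.2 cI.2 else 0

/-- Smoothed noise covariance matrix `R_SS = σ² 𝕄 𝕄ᵀ`. -/
noncomputable def RSS (M L N : ℕ) (σ : ℝ) :
    Matrix (Fin L × Fin N × Fin (M - L + 1)) (Fin L × Fin N × Fin (M - L + 1)) ℂ :=
  ((σ ^ 2 : ℝ) : ℂ) • (Mstack M L N * (Mstack M L N)ᵀ)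


noncomputable def Afun (M : ℕ) (μ : ℝ) (k : ℕ) : ℂ :=
  Complex.exp (Complex.I * (((k : ℝ) - ((M : ℝ) - 1) / 2) : ℝ) * (μ : ℂ))

lemma star_Afun (M : ℕ) (μ : ℝ) (k : ℕ) :
    star (Afun M μ k) = Complex.exp (-(Complex.I * (((k : ℝ) - ((M : ℝ) - 1) / 2) : ℝ) * (μ : ℂ))) := by
  unfold Afun
  rw [show star (Complex.exp (Complex.I * (((k : ℝ) - ((M : ℝ) - 1) / 2) : ℝ) * (μ : ℂ)))
      = Complex.exp (star (Complex.I * (((k : ℝ) - ((M : ℝ) - 1) / 2) : ℝ) * (μ : ℂ))) from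
    (Complex.exp_conj _).symm]
  congr 1
  simp [Complex.conj_I]

lemma normSq_Afun (M : ℕ) (μ : ℝ) (k : ℕ) : Complex.normSq (Afun M μ k) = 1 := by
  unfold Afun
  rw [Complex.normSq_eq_norm_sq,
    show Complex.I * (((k : ℝ) - ((M : ℝ) - 1) / 2) : ℝ) * (μ : ℂ)
      = (((((k : ℝ) - ((M : ℝ) - 1) / 2) * μ : ℝ)) : ℂ) * Complex.I by push_cast; ring,
    Complex.norm_exp_ofReal_mul_I]
  norm_num

lemma Afun_mul_star (M : ℕ) (μ : ℝ) (k : ℕ) : Afun M μ k * star (Afun M μ k) = 1 := by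
  rw [Complex.star_def, Complex.mul_conj, normSq_Afun]; norm_num

lemma star_exp_mul_star_Afun (M : ℕ) (μ : ℝ) (l p : ℕ) :
    star (Complex.exp (Complex.I * ((l : ℕ) : ℂ) * (μ : ℂ))) * star (Afun M μ p)
      = star (Afun M μ (p + l)) := by
  rw [star_Afun, star_Afun,
    show star (Complex.exp (Complex.I * ((l : ℕ) : ℂ) * (μ : ℂ)))
      = Complex.exp (star (Complex.I * ((l : ℕ) : ℂ) * (μ : ℂ))) from (Complex.exp_conj _).symm,
    ← Complex.exp_add]
  congr 1
  simp [Complex.conj_I]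
  push_cast
  ring

lemma sum_fin_ite_lt {n : ℕ} (f : Fin n → ℂ) (k : ℕ) (hk : k < n) :
    (∑ q : Fin n, if (q : ℕ) = k then f q else 0) = f ⟨k, hk⟩ := by
  rw [Finset.sum_eq_single (⟨k, hk⟩ : Fin n)]
  · simp
  · intro b _ hb
    rw [if_neg]
    exact fun h => hb (Fin.ext h)
  · simp

lemma sum_fin_ite_ge {n : ℕ} (f : Fin n → ℂ) (k : ℕ) (hk : n ≤ k) :
    (∑ q : Fin n, if (q : ℕ) = k then f q else 0) = 0 := by
  apply Finset.sum_eq_zero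
  intro q _
  have := q.isLt
  rw [if_neg]
  omega

lemma count_window (a b n : ℕ) :
    (∑ k ∈ Finset.range n, if a ≤ k ∧ k < b then (1 : ℂ) else 0) = ((min n b - a : ℕ) : ℂ) := by
  induction n with
  | zero => simp
  | succ n ih =>
    rw [Finset.sum_range_succ, ih]
    by_cases h : a ≤ n ∧ n < b
    · rw [if_pos h, show min (n+1) b - a = (min n b - a) + 1 by omega]
      push_cast; ring
    · rw [if_neg h, show min (n+1) b - a = min n b - a by omega]
      ring

section Lemmas
variable {M L N : ℕ} {μ : ℝ} {s : Fin N → ℂ}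

lemma cast_m (hLM : L ≤ M) : ((M : ℝ) - (L : ℝ) + 1) = ((M - L + 1 : ℕ) : ℝ) := by
  push_cast [hLM]; ring

lemma avec_apply (hL : 1 ≤ L) (hLM : L ≤ M) (p : Fin (M - L + 1)) :
    avec M L μ p = Afun M μ (p : ℕ) := by
  unfold avec
  have hp : (p : ℕ) + 0 < M := by have := p.isLt; omega
  simp only [Matrix.mulVec, dotProduct, sel, Matrix.of_apply, ite_mul, one_mul, zero_mul]
  rw [sum_fin_ite_lt (abar M μ) _ hp]
  simp [abar, Afun]

lemma uvec_apply (hL : 1 ≤ L) (hLM : L ≤ M) (p : Fin (M - L + 1)) :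
    uvec M L μ p = Afun M μ (p : ℕ) / ((Real.sqrt ((M - L + 1 : ℕ) : ℝ) : ℝ) : ℂ) := by
  unfold uvec
  rw [avec_apply hL hLM, cast_m hLM]

lemma wvec_apply (hL : 1 ≤ L) (hLM : L ≤ M) (p : Fin (M - L + 1 - 1)) :
    wvec M L μ p = Afun M μ (p : ℕ) / ((Real.sqrt ((M - L + 1 : ℕ) : ℝ) : ℝ) : ℂ) := by
  unfold wvec
  have hp : (p : ℕ) < M - L + 1 := by have := p.isLt; omega
  simp only [Matrix.mulVec, dotProduct, K1, Matrix.of_apply, ite_mul, one_mul, zero_mul]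
  rw [sum_fin_ite_lt (uvec M L μ) _ hp]
  rw [uvec_apply hL hLM]

lemma enorm_sq {ι : Type*} [Fintype ι] (x : ι → ℂ) :
    (vecEnorm x) ^ 2 = ∑ i, Complex.normSq (x i) := by
  unfold vecEnorm
  rw [Real.sq_sqrt]
  exact Finset.sum_nonneg fun i _ => Complex.normSq_nonneg _

lemma sq_smr (hLM : L ≤ M) :
    (Real.sqrt ((M - L + 1 : ℕ) : ℝ)) ^ 2 = ((M - L + 1 : ℕ) : ℝ) := by
  rw [Real.sq_sqrt]; positivity

lemma enorm_wvec_sq (hL : 1 ≤ L) (hLM : L ≤ M) :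
    (vecEnorm (wvec M L μ)) ^ 2 = ((M - L : ℕ) : ℝ) / ((M - L + 1 : ℕ) : ℝ) := by
  rw [enorm_sq]
  have h1 : ∀ p : Fin (M - L + 1 - 1), Complex.normSq (wvec M L μ p)
      = 1 / ((M - L + 1 : ℕ) : ℝ) := by
    intro p
    rw [wvec_apply hL hLM, Complex.normSq_div, normSq_Afun, Complex.normSq_ofReal,
      ← sq, sq_smr hLM]
  rw [Finset.sum_congr rfl fun p _ => h1 p, Finset.sum_const, Finset.card_univ,
    Fintype.card_fin]
  rw [show (M - L + 1 - 1) = M - L from rfl]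
  simp [div_eq_mul_inv]

end Lemmas

noncomputable def Ccon (M L : ℕ) : ℂ :=
  (((M - L + 1 : ℕ) : ℂ) / ((M - L : ℕ) : ℂ)) /
    ((Real.sqrt ((M - L + 1 : ℕ) : ℝ) : ℝ) : ℂ)

def cfun (M L : ℕ) (k : ℕ) : ℂ :=
  (if k = M - L then 1 else 0) - (if k = 0 then 1 else 0)

lemma star_Afun_succ (M : ℕ) (μ : ℝ) (k : ℕ) :
    star (Afun M μ k) * Complex.exp (-(Complex.I * (μ : ℂ)))
      = star (Afun M μ (k + 1)) := by
  rw [star_Afun, star_Afun, ← Complex.exp_add]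
  congr 1
  push_cast
  ring

section Lemmas2
variable {M L N : ℕ} {μ : ℝ} {s : Fin N → ℂ}

lemma smr_ne (hLM : L ≤ M) : ((Real.sqrt ((M - L + 1 : ℕ) : ℝ) : ℝ) : ℂ) ≠ 0 := by
  have h : (0 : ℝ) < Real.sqrt ((M - L + 1 : ℕ) : ℝ) := by
    apply Real.sqrt_pos.mpr
    positivity
  simpa using h.ne'

lemma star_wvec (hL : 1 ≤ L) (hLM : L ≤ M) (p : Fin (M - L + 1 - 1)) :
    star (wvec M L μ p)
      = star (Afun M μ (p : ℕ)) / ((Real.sqrt ((M - L + 1 : ℕ) : ℝ) : ℝ) : ℂ) := by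
  rw [wvec_apply hL hLM, star_div₀]
  simp [Complex.star_def, Complex.conj_ofReal]

lemma rvec_apply (hL : 1 ≤ L) (hLM : L ≤ M) (hd : 1 ≤ M - L) (p : Fin (M - L + 1)) :
    rvec M L μ p = Ccon M L * star (Afun M μ (p : ℕ)) * cfun M L (p : ℕ) := by
  have hp := p.isLt
  have hdC : ((M - L : ℕ) : ℂ) ≠ 0 := Nat.cast_ne_zero.mpr (by omega)
  have hmC : ((M - L + 1 : ℕ) : ℂ) ≠ 0 := Nat.cast_ne_zero.mpr (by omega)
  have hsC := smr_ne (M := M) (L := L) hLM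
  have hterm : ∀ p' : Fin (M - L + 1 - 1),
      star (wvec M L μ p')
          * ((Complex.exp (-(Complex.I * (μ : ℂ))) • K2 (M - L + 1) - K1 (M - L + 1)) p' p)
        = (if (p' : ℕ) = (p : ℕ) - 1 ∧ (p : ℕ) ≠ 0 then
            star (Afun M μ (p : ℕ)) / ((Real.sqrt ((M - L + 1 : ℕ) : ℝ) : ℝ) : ℂ) else 0)
          - (if (p' : ℕ) = (p : ℕ) ∧ (p : ℕ) ≠ M - L then
            star (Afun M μ (p : ℕ)) / ((Real.sqrt ((M - L + 1 : ℕ) : ℝ) : ℝ) : ℂ) else 0) := by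
    intro p'
    have hp' : (p' : ℕ) < M - L + 1 - 1 := p'.isLt
    have hent : (Complex.exp (-(Complex.I * (μ : ℂ))) • K2 (M - L + 1) - K1 (M - L + 1)) p' p
        = Complex.exp (-(Complex.I * (μ : ℂ))) * (if (p : ℕ) = (p' : ℕ) + 1 then 1 else 0)
          - (if (p : ℕ) = (p' : ℕ) then 1 else 0) := by
      simp [K1, K2, Matrix.sub_apply, Matrix.smul_apply, smul_eq_mul]
    rw [hent, star_wvec hL hLM, mul_sub]
    congr 1
    · split_ifs with h1 h2
      · rw [mul_one, div_mul_eq_mul_div, star_Afun_succ, ← h1]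
      · exfalso; omega
      · exfalso; omega
      · simp
    · split_ifs with h1 h2
      · rw [mul_one, h1]
      · exfalso; omega
      · exfalso; omega
      · simp
  unfold rvec
  simp only [Matrix.vecMul, dotProduct]
  rw [Finset.sum_congr rfl (fun p' _ => hterm p'), Finset.sum_sub_distrib]
  set X := star (Afun M μ (p : ℕ)) / ((Real.sqrt ((M - L + 1 : ℕ) : ℝ) : ℝ) : ℂ) with hX
  have hs1 : (∑ p' : Fin (M - L + 1 - 1),
      if (p' : ℕ) = (p : ℕ) - 1 ∧ (p : ℕ) ≠ 0 then X else 0)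
      = if (p : ℕ) = 0 then 0 else X := by
    by_cases hp0 : (p : ℕ) = 0
    · rw [if_pos hp0]
      exact Finset.sum_eq_zero (fun p' _ => if_neg (fun h => h.2 hp0))
    · rw [if_neg hp0, Finset.sum_congr rfl (fun p' _ => if_congr
        (Iff.intro (fun h => h.1) (fun h => ⟨h, hp0⟩)) rfl rfl),
        sum_fin_ite_lt (fun _ => X) _ (show (p : ℕ) - 1 < M - L + 1 - 1 by omega)]
  have hs2 : (∑ p' : Fin (M - L + 1 - 1),
      if (p' : ℕ) = (p : ℕ) ∧ (p : ℕ) ≠ M - L then X else 0)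
      = if (p : ℕ) = M - L then 0 else X := by
    by_cases hpd : (p : ℕ) = M - L
    · rw [if_pos hpd]
      exact Finset.sum_eq_zero (fun p' _ => if_neg (fun h => h.2 hpd))
    · rw [if_neg hpd, Finset.sum_congr rfl (fun p' _ => if_congr
        (Iff.intro (fun h => h.1) (fun h => ⟨h, hpd⟩)) rfl rfl),
        sum_fin_ite_lt (fun _ => X) _ (show (p : ℕ) < M - L + 1 - 1 by omega)]
  rw [hs1, hs2, hX, enorm_wvec_sq hL hLM]
  unfold cfun Ccon
  push_cast
  split_ifs with h1 h2 h2
  · exfalso; omega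
  · field_simp
    ring
  · field_simp
    ring
  · simp

end Lemmas2

section Lemmas3
variable {M L N : ℕ} {μ : ℝ} {s : Fin N → ℂ}

lemma sum_cfun (hd : 1 ≤ M - L) :
    ∑ i : Fin (M - L + 1), cfun M L (i : ℕ) = 0 := by
  unfold cfun
  rw [Finset.sum_sub_distrib,
    sum_fin_ite_lt (fun _ => (1 : ℂ)) (M - L) (by omega),
    sum_fin_ite_lt (fun _ => (1 : ℂ)) 0 (by omega), sub_self]

lemma sum_Afun_rvec (hL : 1 ≤ L) (hLM : L ≤ M) (hd : 1 ≤ M - L) :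
    ∑ i : Fin (M - L + 1), Afun M μ (i : ℕ) * rvec M L μ i = 0 := by
  have h1 : ∀ i : Fin (M - L + 1),
      Afun M μ (i : ℕ) * rvec M L μ i = Ccon M L * cfun M L (i : ℕ) := by
    intro i
    rw [rvec_apply hL hLM hd i]
    linear_combination (Ccon M L * cfun M L (i : ℕ)) * Afun_mul_star M μ (i : ℕ)
  rw [Finset.sum_congr rfl (fun i _ => h1 i), ← Finset.mul_sum, sum_cfun hd, mul_zero]

lemma Pproj_apply (hL : 1 ≤ L) (hLM : L ≤ M) (i p : Fin (M - L + 1)) :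
    Pproj M L μ i p = (if i = p then 1 else 0)
      - ((M - L + 1 : ℕ) : ℂ)⁻¹ * (Afun M μ (i : ℕ) * star (Afun M μ (p : ℕ))) := by
  unfold Pproj
  simp [Matrix.sub_apply, Matrix.one_apply, Matrix.smul_apply, Matrix.vecMulVec_apply,
    avec_apply hL hLM, smul_eq_mul, Pi.star_apply]

lemma sum_Pproj_rvec (hL : 1 ≤ L) (hLM : L ≤ M) (hd : 1 ≤ M - L) (p : Fin (M - L + 1)) :
    ∑ i : Fin (M - L + 1), Pproj M L μ i p * rvec M L μ i = rvec M L μ p := by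
  have h1 : ∀ i : Fin (M - L + 1), Pproj M L μ i p * rvec M L μ i
      = (if i = p then 1 else 0) * rvec M L μ i
        - (((M - L + 1 : ℕ) : ℂ)⁻¹ * star (Afun M μ (p : ℕ)))
            * (Afun M μ (i : ℕ) * rvec M L μ i) := by
    intro i
    rw [Pproj_apply hL hLM]
    ring
  rw [Finset.sum_congr rfl (fun i _ => h1 i), Finset.sum_sub_distrib, ← Finset.mul_sum,
    sum_Afun_rvec hL hLM hd, mul_zero, sub_zero]
  simp [ite_mul]

lemma zvec_apply (hL : 1 ≤ L) (hLM : L ≤ M) (hd : 1 ≤ M - L)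
    (c : Fin L × Fin N × Fin (M - L + 1)) :
    zvec M L N μ s c = ((sigma1 M L N μ s : ℝ) : ℂ)⁻¹ * vvec L N μ s (c.1, c.2.1)
      * (Ccon M L * star (Afun M μ (c.2.2 : ℕ)) * cfun M L (c.2.2 : ℕ)) := by
  unfold zvec
  simp only [Matrix.mulVec, dotProduct, Matrix.transpose_apply, Wmat, Matrix.of_apply]
  have h1 : ∀ i : Fin (M - L + 1),
      ((sigma1 M L N μ s : ℝ) : ℂ)⁻¹ * vvec L N μ s (c.1, c.2.1) * Pproj M L μ i c.2.2
          * rvec M L μ i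
        = ((sigma1 M L N μ s : ℝ) : ℂ)⁻¹ * vvec L N μ s (c.1, c.2.1)
          * (Pproj M L μ i c.2.2 * rvec M L μ i) := fun i => by ring
  rw [Finset.sum_congr rfl (fun i _ => h1 i), ← Finset.mul_sum,
    sum_Pproj_rvec hL hLM hd, rvec_apply hL hLM hd]

end Lemmas3

def gfun (M L : ℕ) (k : ℕ) : ℂ :=
  (if M - L ≤ k then 1 else 0) - (if k < L then 1 else 0)

section Lemmas4
variable {M L N : ℕ} {μ : ℝ} {s : Fin N → ℂ}

lemma sum_cfun_window (hL : 1 ≤ L) (hLM : L ≤ M) (hd : 1 ≤ M - L) (q : ℕ) (hq : q < M) :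
    (∑ ℓ : Fin L, ∑ p : Fin (M - L + 1),
      if q = (p : ℕ) + (ℓ : ℕ) then cfun M L (p : ℕ) else 0) = gfun M L q := by
  rw [Finset.sum_comm]
  have h1 : ∀ p : Fin (M - L + 1),
      (∑ ℓ : Fin L, if q = (p : ℕ) + (ℓ : ℕ) then cfun M L (p : ℕ) else 0)
        = if (p : ℕ) ≤ q ∧ q < (p : ℕ) + L then cfun M L (p : ℕ) else 0 := by
    intro p
    by_cases h : (p : ℕ) ≤ q ∧ q < (p : ℕ) + L
    · rw [if_pos h]
      have step : (∑ ℓ : Fin L, if q = (p : ℕ) + (ℓ : ℕ) then cfun M L (p : ℕ) else 0)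
          = ∑ ℓ : Fin L, if (ℓ : ℕ) = q - (p : ℕ) then cfun M L (p : ℕ) else 0 :=
        Finset.sum_congr rfl (fun ℓ _ => if_congr (by constructor <;> (intro; omega)) rfl rfl)
      rw [step, sum_fin_ite_lt (fun _ => cfun M L (p : ℕ)) (q - (p : ℕ)) (by omega)]
    · rw [if_neg h]
      exact Finset.sum_eq_zero (fun ℓ _ => if_neg (by have := ℓ.isLt; omega))
  rw [Finset.sum_congr rfl (fun p _ => h1 p)]
  have h2 : ∀ p : Fin (M - L + 1),
      (if (p : ℕ) ≤ q ∧ q < (p : ℕ) + L then cfun M L (p : ℕ) else 0)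
        = (if (p : ℕ) = M - L then (if (p : ℕ) ≤ q ∧ q < (p : ℕ) + L then (1 : ℂ) else 0) else 0)
          - (if (p : ℕ) = 0 then (if (p : ℕ) ≤ q ∧ q < (p : ℕ) + L then (1 : ℂ) else 0) else 0) := by
    intro p
    unfold cfun
    split_ifs <;> norm_num
  rw [Finset.sum_congr rfl (fun p _ => h2 p), Finset.sum_sub_distrib,
    sum_fin_ite_lt (fun p : Fin (M - L + 1) =>
      (if (p : ℕ) ≤ q ∧ q < (p : ℕ) + L then (1 : ℂ) else 0)) (M - L) (by omega),
    sum_fin_ite_lt (fun p : Fin (M - L + 1) =>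
      (if (p : ℕ) ≤ q ∧ q < (p : ℕ) + L then (1 : ℂ) else 0)) 0 (by omega)]
  unfold gfun
  simp only [Fin.val_mk]
  congr 1
  · exact if_congr ⟨fun h => h.1, fun h => ⟨h, by omega⟩⟩ rfl rfl
  · exact if_congr ⟨fun h => by omega, fun h => ⟨by omega, by omega⟩⟩ rfl rfl

lemma yvec_apply (hL : 1 ≤ L) (hLM : L ≤ M) (hd : 1 ≤ M - L) (d : Fin N × Fin M) :
    ((Mstack M L N)ᵀ *ᵥ zvec M L N μ s) d
      = ((sigma1 M L N μ s : ℝ) : ℂ)⁻¹ * ((vecEnorm (sLvec L N μ s) : ℝ) : ℂ)⁻¹ * Ccon M L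
        * star (s d.1) * star (Afun M μ (d.2 : ℕ)) * gfun M L (d.2 : ℕ) := by
  simp only [Matrix.mulVec, dotProduct, Matrix.transpose_apply, Mstack,
    Matrix.of_apply, sel]
  have hsummand : ∀ c : Fin L × Fin N × Fin (M - L + 1),
      (if c.2.1 = d.1 then (if (d.2 : ℕ) = (c.2.2 : ℕ) + (c.1 : ℕ) then (1 : ℂ) else 0) else 0)
          * zvec M L N μ s c
        = if c.2.1 = d.1 then (if (d.2 : ℕ) = (c.2.2 : ℕ) + (c.1 : ℕ) then
            ((sigma1 M L N μ s : ℝ) : ℂ)⁻¹ * ((vecEnorm (sLvec L N μ s) : ℝ) : ℂ)⁻¹ * Ccon M L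
              * star (s d.1) * star (Afun M μ (d.2 : ℕ)) * cfun M L ((c.2.2 : ℕ))
          else 0) else 0 := by
    rintro ⟨ℓ, n, p⟩
    simp only
    split_ifs with hn hq
    · rw [one_mul, zvec_apply hL hLM hd]
      simp only [vvec, sLvec]
      rw [star_mul', hq, ← star_exp_mul_star_Afun, ← hn]
      ring
    · exact zero_mul _
    · exact zero_mul _
  rw [Finset.sum_congr rfl (fun c _ => hsummand c)]
  simp only [Fintype.sum_prod_type]
  set K := ((sigma1 M L N μ s : ℝ) : ℂ)⁻¹ * ((vecEnorm (sLvec L N μ s) : ℝ) : ℂ)⁻¹ * Ccon M L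
      * star (s d.1) * star (Afun M μ (d.2 : ℕ)) with hK
  have hstep : ∀ (n : Fin N) (ℓ : Fin L), (∑ p : Fin (M - L + 1),
      if n = d.1 then (if (d.2 : ℕ) = (p : ℕ) + (ℓ : ℕ) then K * cfun M L (p : ℕ) else 0) else 0)
      = if n = d.1 then (∑ p : Fin (M - L + 1),
          if (d.2 : ℕ) = (p : ℕ) + (ℓ : ℕ) then K * cfun M L (p : ℕ) else 0) else 0 := by
    intro n ℓ
    split_ifs <;> simp
  have h2 : ∀ ℓ : Fin L, (∑ n : Fin N, ∑ p : Fin (M - L + 1),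
      if n = d.1 then (if (d.2 : ℕ) = (p : ℕ) + (ℓ : ℕ) then K * cfun M L (p : ℕ) else 0) else 0)
      = ∑ p : Fin (M - L + 1),
          if (d.2 : ℕ) = (p : ℕ) + (ℓ : ℕ) then K * cfun M L (p : ℕ) else 0 := by
    intro ℓ
    rw [Finset.sum_congr rfl (fun n _ => hstep n ℓ), Finset.sum_ite_eq' Finset.univ d.1]
    simp
  rw [Finset.sum_congr rfl (fun ℓ _ => h2 ℓ)]
  have h3 : ∀ (ℓ : Fin L) (p : Fin (M - L + 1)),
      (if (d.2 : ℕ) = (p : ℕ) + (ℓ : ℕ) then K * cfun M L (p : ℕ) else 0)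
        = K * (if (d.2 : ℕ) = (p : ℕ) + (ℓ : ℕ) then cfun M L (p : ℕ) else 0) := by
    intro ℓ p
    split_ifs <;> simp
  rw [Finset.sum_congr rfl (fun ℓ _ => Finset.sum_congr rfl (fun p _ => h3 ℓ p))]
  simp_rw [← Finset.mul_sum]
  rw [sum_cfun_window hL hLM hd (d.2 : ℕ) d.2.isLt]

end Lemmas4

section Lemmas5
variable {M L N : ℕ} {μ : ℝ} {s : Fin N → ℂ}

lemma normSq_expI (μ : ℝ) (l : ℕ) :
    Complex.normSq (Complex.exp (Complex.I * ((l : ℕ) : ℂ) * (μ : ℂ))) = 1 := by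
  rw [Complex.normSq_eq_norm_sq,
    show Complex.I * ((l : ℕ) : ℂ) * (μ : ℂ) = ((((l : ℕ) : ℝ) * μ : ℝ) : ℂ) * Complex.I by
      push_cast; ring,
    Complex.norm_exp_ofReal_mul_I]
  norm_num

lemma enorm_sL_sq : (vecEnorm (sLvec L N μ s)) ^ 2 = (L : ℝ) * (vecEnorm s) ^ 2 := by
  rw [enorm_sq, enorm_sq]
  rw [Fintype.sum_prod_type]
  have h1 : ∀ ℓ : Fin L, ∑ n : Fin N, Complex.normSq (sLvec L N μ s (ℓ, n))
      = ∑ n : Fin N, Complex.normSq (s n) := by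
    intro ℓ
    apply Finset.sum_congr rfl
    intro n _
    unfold sLvec
    rw [Complex.normSq_mul, normSq_expI, one_mul]
  rw [Finset.sum_congr rfl (fun ℓ _ => h1 ℓ), Finset.sum_const, Finset.card_univ,
    Fintype.card_fin, nsmul_eq_mul]

lemma vecEnorm_pos (hs : s ≠ 0) : 0 < vecEnorm s := by
  apply Real.sqrt_pos.mpr
  have : ∃ n, s n ≠ 0 := by
    by_contra h
    push_neg at h
    exact hs (funext h)
  obtain ⟨n, hn⟩ := this
  apply Finset.sum_pos' (fun i _ => Complex.normSq_nonneg _)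
  exact ⟨n, Finset.mem_univ n, Complex.normSq_pos.mpr hn⟩

lemma sum_normSq_gfun (hL : 1 ≤ L) (hLM : L ≤ M) (hd : 1 ≤ M - L) :
    ∑ q : Fin M, (Complex.normSq (gfun M L (q : ℕ)) : ℂ)
      = ((2 * min L (M - L) : ℕ) : ℂ) := by
  rw [Fin.sum_univ_eq_sum_range (fun k => (Complex.normSq (gfun M L k) : ℂ)) M]
  have h1 : ∀ k ∈ Finset.range M, (Complex.normSq (gfun M L k) : ℂ)
      = (if max L (M - L) ≤ k ∧ k < M then (1 : ℂ) else 0)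
        + (if 0 ≤ k ∧ k < min L (M - L) then (1 : ℂ) else 0) := by
    intro k hk
    rw [Finset.mem_range] at hk
    unfold gfun
    split_ifs with h1 h2 h3 h4 h3 h4 h3 h4 <;> first
      | (exfalso; omega)
      | norm_num
  rw [Finset.sum_congr rfl h1, Finset.sum_add_distrib, count_window, count_window,
    ← Nat.cast_add,
    show (min M M - max L (M - L)) + (min M (min L (M - L)) - 0) = 2 * min L (M - L) by omega]

end Lemmas5

/-- **Theorem 3 (1-D exact form).** The first-order MSE expression of 1-D Standard
ESPRIT with spatial smoothing evaluates exactly to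
`(1/2) zᴴ R_SS z = (σ²/‖s‖²) · min{L, M-L} / ((M-L)² L²)`. -/
theorem mse_single_source_spatial_smoothing (M L N : ℕ)
    (hL : 1 ≤ L) (hLM : L ≤ M - 1) (hm : 2 ≤ M - L + 1) (hN : 1 ≤ N)
    (μ : ℝ) (s : Fin N → ℂ) (hs : s ≠ 0) (σ : ℝ) (hσ : 0 < σ) :
    (1 / 2 : ℂ) *
        (star (zvec M L N μ s) ⬝ᵥ (RSS M L N σ *ᵥ zvec M L N μ s))
      = ((σ ^ 2 : ℝ) : ℂ) / ((vecEnorm s : ℝ) : ℂ) ^ 2 *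
          ((min L (M - L) : ℕ) : ℂ) /
          (((M - L : ℕ) : ℂ) ^ 2 * ((L : ℕ) : ℂ) ^ 2) := by
  have hLM' : L ≤ M := by omega
  have hd : 1 ≤ M - L := by omega
  -- Step 1: quadratic form as sum of squared magnitudes of y = 𝕄ᵀ z
  set y : Fin N × Fin M → ℂ := (Mstack M L N)ᵀ *ᵥ zvec M L N μ s with hy
  have hstep1 : star (zvec M L N μ s) ⬝ᵥ (RSS M L N σ *ᵥ zvec M L N μ s)
      = ((σ ^ 2 : ℝ) : ℂ) * ∑ d : Fin N × Fin M, (Complex.normSq (y d) : ℂ) := by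
    unfold RSS
    rw [Matrix.smul_mulVec, dotProduct_smul, smul_eq_mul]
    congr 1
    rw [← Matrix.mulVec_mulVec, Matrix.dotProduct_mulVec]
    have hvm : star (zvec M L N μ s) ᵥ* Mstack M L N = fun d => star (y d) := by
      funext d
      simp only [hy, Matrix.vecMul, Matrix.mulVec, dotProduct, Matrix.transpose_apply,
        Pi.star_apply, star_sum, star_mul']
      apply Finset.sum_congr rfl
      intro c _
      have hM : star (Mstack M L N c d) = Mstack M L N c d := by
        unfold Mstack sel
        simp only [Matrix.of_apply]
        split_ifs <;> simp
      rw [hM]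
      ring
    rw [hvm]
    simp only [dotProduct, Pi.star_apply]
    apply Finset.sum_congr rfl
    intro d _
    rw [mul_comm]
    exact Complex.mul_conj (y d)
  rw [hstep1]
  -- Step 2: closed form for normSq (y d)
  set Kc : ℂ := ((sigma1 M L N μ s : ℝ) : ℂ)⁻¹ * ((vecEnorm (sLvec L N μ s) : ℝ) : ℂ)⁻¹
      * Ccon M L with hKc
  have hnd : ∀ d : Fin N × Fin M, (Complex.normSq (y d) : ℂ)
      = (Complex.normSq Kc : ℂ) * (Complex.normSq (s d.1) : ℂ)
        * (Complex.normSq (gfun M L (d.2 : ℕ)) : ℂ) := by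
    intro d
    rw [hy, yvec_apply hL hLM' hd d]
    rw [show ((sigma1 M L N μ s : ℝ) : ℂ)⁻¹ * ((vecEnorm (sLvec L N μ s) : ℝ) : ℂ)⁻¹ * Ccon M L
        * star (s d.1) * star (Afun M μ (d.2 : ℕ)) * gfun M L (d.2 : ℕ)
        = Kc * star (s d.1) * star (Afun M μ (d.2 : ℕ)) * gfun M L (d.2 : ℕ) from by
      rw [hKc]]
    simp only [Complex.normSq_mul, Complex.star_def, Complex.normSq_conj, normSq_Afun, mul_one]
    push_cast
    ring
  rw [Finset.sum_congr rfl (fun d _ => hnd d), Fintype.sum_prod_type]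
  have hsplit : ∑ n : Fin N, ∑ q : Fin M, (Complex.normSq Kc : ℂ) * (Complex.normSq (s n) : ℂ)
        * (Complex.normSq (gfun M L (q : ℕ)) : ℂ)
      = (Complex.normSq Kc : ℂ) * (∑ n : Fin N, (Complex.normSq (s n) : ℂ))
        * (∑ q : Fin M, (Complex.normSq (gfun M L (q : ℕ)) : ℂ)) := by
    have h1 : ∀ n : Fin N, (∑ q : Fin M, (Complex.normSq Kc : ℂ) * (Complex.normSq (s n) : ℂ)
        * (Complex.normSq (gfun M L (q : ℕ)) : ℂ))
        = (Complex.normSq Kc : ℂ) * (Complex.normSq (s n) : ℂ)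
          * (∑ q : Fin M, (Complex.normSq (gfun M L (q : ℕ)) : ℂ)) :=
      fun n => by rw [← Finset.mul_sum]
    rw [Finset.sum_congr rfl (fun n _ => h1 n), ← Finset.sum_mul, ← Finset.mul_sum]
  rw [hsplit, sum_normSq_gfun hL hLM' hd]
  have hes : (∑ n : Fin N, (Complex.normSq (s n) : ℂ)) = ((vecEnorm s : ℝ) : ℂ) ^ 2 := by
    rw [show ((vecEnorm s : ℝ) : ℂ) ^ 2 = (((vecEnorm s) ^ 2 : ℝ) : ℂ) by push_cast; ring, enorm_sq]
    push_cast
    rfl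
  rw [hes]
  -- Step 3: numerical evaluation
  have hesp : (0 : ℝ) < vecEnorm s := vecEnorm_pos hs
  have hdr : ((M - L : ℕ) : ℝ) ≠ 0 := Nat.cast_ne_zero.mpr (by omega)
  have hLr : ((L : ℕ) : ℝ) ≠ 0 := Nat.cast_ne_zero.mpr (by omega)
  have hmr : ((M - L + 1 : ℕ) : ℝ) ≠ 0 := Nat.cast_ne_zero.mpr (by omega)
  have h0 : Complex.normSq (Ccon M L)
      = ((M - L + 1 : ℕ) : ℝ) / ((M - L : ℕ) : ℝ) ^ 2 := by
    unfold Ccon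
    rw [Complex.normSq_div, Complex.normSq_div, Complex.normSq_natCast,
      Complex.normSq_natCast, Complex.normSq_ofReal,
      Real.mul_self_sqrt (by positivity)]
    generalize hA : ((M - L : ℕ) : ℝ) = a
    generalize hB : ((M - L + 1 : ℕ) : ℝ) = b
    rw [hA] at hdr
    rw [hB] at hmr
    field_simp
  have hKv : Complex.normSq Kc
      = 1 / (((M - L : ℕ) : ℝ) ^ 2 * ((L : ℕ) : ℝ) ^ 2 * (vecEnorm s) ^ 4) := by
    rw [hKc, Complex.normSq_mul, Complex.normSq_mul, Complex.normSq_inv, Complex.normSq_inv,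
      Complex.normSq_ofReal, Complex.normSq_ofReal, h0]
    have hsig : sigma1 M L N μ s * sigma1 M L N μ s
        = ((M - L + 1 : ℕ) : ℝ) * ((L : ℝ) * (vecEnorm s) ^ 2) := by
      unfold sigma1
      rw [cast_m hLM', mul_mul_mul_comm, Real.mul_self_sqrt (by positivity), ← sq,
        enorm_sL_sq]
    have hesl : vecEnorm (sLvec L N μ s) * vecEnorm (sLvec L N μ s)
        = (L : ℝ) * (vecEnorm s) ^ 2 := by
      rw [← sq, enorm_sL_sq]
    rw [hsig, hesl]
    have hes0 : vecEnorm s ≠ 0 := hesp.ne'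
    generalize hA : ((M - L : ℕ) : ℝ) = a
    generalize hB : ((M - L + 1 : ℕ) : ℝ) = b
    generalize hE : vecEnorm s = e
    rw [hA] at hdr
    rw [hB] at hmr
    rw [hE] at hes0
    rw [show ((L : ℕ) : ℝ) = (L : ℝ) from rfl]
    field_simp
  rw [hKv]
  have hesC : ((vecEnorm s : ℝ) : ℂ) ≠ 0 := by
    simpa using hesp.ne'
  have hdC : ((M - L : ℕ) : ℂ) ≠ 0 := Nat.cast_ne_zero.mpr (by omega)
  have hLC : ((L : ℕ) : ℂ) ≠ 0 := Nat.cast_ne_zero.mpr (by omega)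
  simp only [Complex.ofReal_div, Complex.ofReal_one, Complex.ofReal_mul, Complex.ofReal_pow,
    Complex.ofReal_natCast, Nat.cast_mul, Nat.cast_ofNat]
  generalize hA : ((M - L : ℕ) : ℂ) = A
  generalize hB : ((L : ℕ) : ℂ) = B
  generalize hMn : ((min L (M - L) : ℕ) : ℂ) = mn
  generalize hE : ((vecEnorm s : ℝ) : ℂ) = E
  rw [hA] at hdC
  rw [hB] at hLC
  rw [hE] at hesC
  field_simp
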